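/- Let p, e ∈ ℂ²⊗ℂ² be orthogonal unit vectors with p a product vector and e an entangled (non-product) vector. Then the orthogonal projection P = pp* + ee* onto span{p, e} has a partial transpose with a strictly negative eigenvalue; in particular P is not separable. -/

import Mathlib

noncomputable section

open scoped ComplexOrder

/-- The two-qubit Hilbert space ℂ² ⊗ ℂ², modeled as ℂ^(2×2) with the standard inner product. -/
abbrev TwoQubit : Type := EuclideanSpace ℂ (Fin 2 × Fin 2)

/-- The computational basis vector |ab⟩. -/
def ket (a b : Fin 2) : TwoQubit := EuclideanSpace.single (a, b) 1

/-- A vector is a product vector if it is of the form u ⊗ w. -/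
def IsProductVec (v : TwoQubit) : Prop :=
  ∃ u w : Fin 2 → ℂ, ∀ a b : Fin 2, v (a, b) = u a * w b

/-- The 2×2 coefficient matrix of a vector in ℂ² ⊗ ℂ². -/
def coeffMat (v : TwoQubit) : Matrix (Fin 2) (Fin 2) ℂ :=
  Matrix.of fun a b => v (a, b)

/-- Partial transpose (on the second tensor factor) of an operator on ℂ² ⊗ ℂ². -/
def ptrans (M : Matrix (Fin 2 × Fin 2) (Fin 2 × Fin 2) ℂ) :
    Matrix (Fin 2 × Fin 2) (Fin 2 × Fin 2) ℂ :=
  Matrix.of fun p q => M (p.1, q.2) (q.1, p.2)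

/-- The matrix of the orthogonal projection vv* + ww* onto span{v, w} (for orthonormal v, w). -/
def projMat (v w : TwoQubit) : Matrix (Fin 2 × Fin 2) (Fin 2 × Fin 2) ℂ :=
  Matrix.of fun p q => v p * star (v q) + w p * star (w q)

/-- `M` has a strictly negative (real) eigenvalue. -/
def HasNegEig (M : Matrix (Fin 2 × Fin 2) (Fin 2 × Fin 2) ℂ) : Prop :=
  ∃ c : ℝ, c < 0 ∧ ∃ x : (Fin 2 × Fin 2) → ℂ, x ≠ 0 ∧ M.mulVec x = (c : ℂ) • x

/-- An operator on ℂ² ⊗ ℂ² is separable if it is a finite sum of Kronecker products of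
positive semidefinite operators. -/
def SeparableOp (M : Matrix (Fin 2 × Fin 2) (Fin 2 × Fin 2) ℂ) : Prop :=
  ∃ (n : ℕ) (A B : Fin n → Matrix (Fin 2) (Fin 2) ℂ),
    (∀ i, (A i).PosSemidef) ∧ (∀ i, (B i).PosSemidef) ∧
    M = ∑ i, Matrix.kroneckerMap (· * ·) (A i) (B i)

local notation "cj" => starRingEnd ℂ

lemma sum_pq {M : Type*} [AddCommMonoid M] (φ : Fin 2 × Fin 2 → M) :
    ∑ i : Fin 2 × Fin 2, φ i = φ (0, 0) + φ (0, 1) + φ (1, 0) + φ (1, 1) := by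
  simp only [Fintype.sum_prod_type, Fin.sum_univ_two]
  abel

lemma isProduct_of_det {v : TwoQubit}
    (h : v (0, 0) * v (1, 1) - v (0, 1) * v (1, 0) = 0) : IsProductVec v := by
  by_cases h00 : v (0, 0) = 0
  · by_cases h01 : v (0, 1) = 0
    · refine ⟨![0, 1], ![v (1, 0), v (1, 1)], ?_⟩
      intro a b; fin_cases a <;> fin_cases b <;>
        simp only [Fin.zero_eta, Fin.mk_one, Matrix.cons_val_zero, Matrix.cons_val_one,
          Matrix.head_cons]
      · rw [h00]; ring
      · rw [h01]; ring
      · ring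
      · ring
    · have h10 : v (1, 0) = 0 := by
        have h2 : v (0, 1) * v (1, 0) = 0 := by
          rw [h00] at h; linear_combination -h
        rcases mul_eq_zero.mp h2 with hc | hc
        · exact absurd hc h01
        · exact hc
      refine ⟨![v (0, 1), v (1, 1)], ![0, 1], ?_⟩
      intro a b; fin_cases a <;> fin_cases b <;>
        simp only [Fin.zero_eta, Fin.mk_one, Matrix.cons_val_zero, Matrix.cons_val_one,
          Matrix.head_cons]
      · rw [h00]; ring
      · ring
      · rw [h10]; ring
      · ring
  · refine ⟨![v (0, 0), v (1, 0)], ![1, v (0, 1) / v (0, 0)], ?_⟩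
    intro a b; fin_cases a <;> fin_cases b <;>
      simp only [Fin.zero_eta, Fin.mk_one, Matrix.cons_val_zero, Matrix.cons_val_one,
        Matrix.head_cons]
    · ring
    · rw [← mul_div_assoc, mul_div_cancel_left₀ _ h00]
    · ring
    · rw [← mul_div_assoc, eq_div_iff h00]
      linear_combination h
lemma sum_normSq_of_norm_one {v : TwoQubit} (hv : ‖v‖ = 1) :
    Complex.normSq (v (0, 0)) + Complex.normSq (v (0, 1)) + Complex.normSq (v (1, 0)) +
      Complex.normSq (v (1, 1)) = 1 := by
  have h := EuclideanSpace.norm_eq v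
  rw [hv] at h
  have h2 : ∑ i : Fin 2 × Fin 2, ‖v i‖ ^ 2 = 1 := Real.sqrt_eq_one.mp h.symm
  rw [sum_pq (fun i => ‖v i‖ ^ 2)] at h2
  simpa [Complex.normSq_eq_norm_sq] using h2

lemma sum_mul_conj_of_norm_one {v : TwoQubit} (hv : ‖v‖ = 1) :
    v (0, 0) * cj (v (0, 0)) + v (0, 1) * cj (v (0, 1)) + v (1, 0) * cj (v (1, 0)) +
      v (1, 1) * cj (v (1, 1)) = 1 := by
  have h := sum_normSq_of_norm_one hv
  have h2 := congrArg (fun r : ℝ => (r : ℂ)) h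
  push_cast at h2
  rw [Complex.mul_conj, Complex.mul_conj, Complex.mul_conj, Complex.mul_conj]
  push_cast
  linear_combination h2

lemma lagrange_aux (a1 a2 b1 b2 : ℂ) :
    Complex.normSq (cj a1 * b1 + cj a2 * b2) ≤
      (Complex.normSq a1 + Complex.normSq a2) * (Complex.normSq b1 + Complex.normSq b2) := by
  have key : (Complex.normSq a1 + Complex.normSq a2) * (Complex.normSq b1 + Complex.normSq b2)
      = Complex.normSq (cj a1 * b1 + cj a2 * b2) + Complex.normSq (a1 * b2 - a2 * b1) := by
    simp only [Complex.normSq_apply, Complex.add_re, Complex.add_im, Complex.mul_re,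
      Complex.mul_im, Complex.sub_re, Complex.sub_im, Complex.conj_re, Complex.conj_im]
    ring
  nlinarith [Complex.normSq_nonneg (a1 * b2 - a2 * b1)]

def ff00 (μ : ℝ) (e : TwoQubit) : ℂ :=
  -(μ : ℂ) * cj (e (1, 0)) + (cj (e (0, 0)) * cj (e (1, 1)) - cj (e (0, 1)) * cj (e (1, 0))) * e (0, 1)
def ff01 (μ : ℝ) (e : TwoQubit) : ℂ :=
  -(μ : ℂ) * cj (e (1, 1)) - (cj (e (0, 0)) * cj (e (1, 1)) - cj (e (0, 1)) * cj (e (1, 0))) * e (0, 0)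
def ff10 (μ : ℝ) (e : TwoQubit) : ℂ :=
  (μ : ℂ) * cj (e (0, 0)) + (cj (e (0, 0)) * cj (e (1, 1)) - cj (e (0, 1)) * cj (e (1, 0))) * e (1, 1)
def ff11 (μ : ℝ) (e : TwoQubit) : ℂ :=
  (μ : ℂ) * cj (e (0, 1)) - (cj (e (0, 0)) * cj (e (1, 1)) - cj (e (0, 1)) * cj (e (1, 0))) * e (1, 0)

lemma bigQF (μ : ℝ) (e : TwoQubit) (u w : Fin 2 → ℂ) (γ : ℂ)
    (hμ2 : (μ : ℂ) * (μ : ℂ) = (e (0, 0) * e (1, 1) - e (0, 1) * e (1, 0)) *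
      (cj (e (0, 0)) * cj (e (1, 1)) - cj (e (0, 1)) * cj (e (1, 0))))
    (he2 : e (0, 0) * cj (e (0, 0)) + e (0, 1) * cj (e (0, 1)) + e (1, 0) * cj (e (1, 0)) +
      e (1, 1) * cj (e (1, 1)) = 1)
    (horth : cj (u 0) * cj (w 0) * e (0, 0) + cj (u 0) * cj (w 1) * e (0, 1) +
      cj (u 1) * cj (w 0) * e (1, 0) + cj (u 1) * cj (w 1) * e (1, 1) = 0)
    (hgg : (u 0 * cj (u 0) + u 1 * cj (u 1)) * (w 0 * cj (w 0) + w 1 * cj (w 1)) = 1)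
    (hγ : γ = cj (u 0) * (ff00 μ e * w 0 + ff01 μ e * w 1) + cj (u 1) * (ff10 μ e * w 0 + ff11 μ e * w 1)) :
    (cj (ff00 μ e) - (1 - (μ : ℂ)) * cj γ * (cj (u 0) * w 0)) * (((cj (u 0) * w 0) * (ff00 μ e - (1 - (μ : ℂ)) * γ * (u 0 * cj (w 0))) + (cj (u 0) * w 1) * (ff01 μ e - (1 - (μ : ℂ)) * γ * (u 0 * cj (w 1))) + (cj (u 1) * w 0) * (ff10 μ e - (1 - (μ : ℂ)) * γ * (u 1 * cj (w 0))) + (cj (u 1) * w 1) * (ff11 μ e - (1 - (μ : ℂ)) * γ * (u 1 * cj (w 1)))) * (u 0 * cj (w 0)) + (e (0, 0) * cj (e (0, 0)) * (ff00 μ e - (1 - (μ : ℂ)) * γ * (u 0 * cj (w 0))) + e (0, 1) * cj (e (0, 0)) * (ff01 μ e - (1 - (μ : ℂ)) * γ * (u 0 * cj (w 1))) + e (0, 0) * cj (e (1, 0)) * (ff10 μ e - (1 - (μ : ℂ)) * γ * (u 1 * cj (w 0))) + e (0, 1) * cj (e (1, 0)) * (ff11 μ e - (1 - (μ : ℂ))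 * γ * (u 1 * cj (w 1))))) +
      (cj (ff01 μ e) - (1 - (μ : ℂ)) * cj γ * (cj (u 0) * w 1)) * (((cj (u 0) * w 0) * (ff00 μ e - (1 - (μ : ℂ)) * γ * (u 0 * cj (w 0))) + (cj (u 0) * w 1) * (ff01 μ e - (1 - (μ : ℂ)) * γ * (u 0 * cj (w 1))) + (cj (u 1) * w 0) * (ff10 μ e - (1 - (μ : ℂ)) * γ * (u 1 * cj (w 0))) + (cj (u 1) * w 1) * (ff11 μ e - (1 - (μ : ℂ)) * γ * (u 1 * cj (w 1)))) * (u 0 * cj (w 1)) + (e (0, 0) * cj (e (0, 1)) * (ff00 μ e - (1 - (μ : ℂ)) * γ * (u 0 * cj (w 0))) + e (0, 1) * cj (e (0, 1)) * (ff01 μ e - (1 - (μ : ℂ)) * γ * (u 0 * cj (w 1))) + e (0, 0) * cj (e (1, 1)) * (ff10 μ e - (1 - (μ : ℂ)) * γ * (u 1 * cj (w 0))) + e (0, 1) * cj (e (1, 1)) * (ff11 μ e - (1 - (μ : ℂ)) * γ * (u 1 * cj (w 1))))) +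
      (cj (ff10 μ e) - (1 - (μ : ℂ)) * cj γ * (cj (u 1) * w 0)) * (((cj (u 0) * w 0) * (ff00 μ e - (1 - (μ : ℂ)) * γ * (u 0 * cj (w 0))) + (cj (u 0) * w 1) * (ff01 μ e - (1 - (μ : ℂ)) * γ * (u 0 * cj (w 1))) + (cj (u 1) * w 0) * (ff10 μ e - (1 - (μ : ℂ)) * γ * (u 1 * cj (w 0))) + (cj (u 1) * w 1) * (ff11 μ e - (1 - (μ : ℂ)) * γ * (u 1 * cj (w 1)))) * (u 1 * cj (w 0)) + (e (1, 0) * cj (e (0, 0)) * (ff00 μ e - (1 - (μ : ℂ)) * γ * (u 0 * cj (w 0))) + e (1, 1) * cj (e (0, 0)) * (ff01 μ e - (1 - (μ : ℂ)) * γ * (u 0 * cj (w 1))) + e (1, 0) * cj (e (1, 0)) * (ff10 μ e - (1 - (μ : ℂ)) * γ * (u 1 * cj (w 0))) + e (1, 1) * cj (e (1, 0)) * (ff11 μ e - (1 - (μ : ℂ)) * γ * (u 1 * cj (w 1))))) +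
      (cj (ff11 μ e) - (1 - (μ : ℂ)) * cj γ * (cj (u 1) * w 1)) * (((cj (u 0) * w 0) * (ff00 μ e - (1 - (μ : ℂ)) * γ * (u 0 * cj (w 0))) + (cj (u 0) * w 1) * (ff01 μ e - (1 - (μ : ℂ)) * γ * (u 0 * cj (w 1))) + (cj (u 1) * w 0) * (ff10 μ e - (1 - (μ : ℂ)) * γ * (u 1 * cj (w 0))) + (cj (u 1) * w 1) * (ff11 μ e - (1 - (μ : ℂ)) * γ * (u 1 * cj (w 1)))) * (u 1 * cj (w 1)) + (e (1, 0) * cj (e (0, 1)) * (ff00 μ e - (1 - (μ : ℂ)) * γ * (u 0 * cj (w 0))) + e (1, 1) * cj (e (0, 1)) * (ff01 μ e - (1 - (μ : ℂ)) * γ * (u 0 * cj (w 1))) + e (1, 0) * cj (e (1, 1)) * (ff10 μ e - (1 - (μ : ℂ)) * γ * (u 1 * cj (w 0))) + e (1, 1) * cj (e (1, 1)) * (ff11 μ e - (1 - (μ : ℂ)) * γ * (u 1 * cj (w 1))))) =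
    (2 * (μ : ℂ) - (μ : ℂ) ^ 2) * (γ * cj γ) - (μ : ℂ) * (2 * (μ : ℂ) ^ 2 + 4 * (μ : ℂ) ^ 3) := by
  have hγc : cj γ = u 0 * ((-(μ : ℂ) * e (1, 0) + (e (0, 0) * e (1, 1) - e (0, 1) * e (1, 0)) * cj (e (0, 1))) * cj (w 0) + (-(μ : ℂ) * e (1, 1) - (e (0, 0) * e (1, 1) - e (0, 1) * e (1, 0)) * cj (e (0, 0))) * cj (w 1)) + u 1 * (((μ : ℂ) * e (0, 0) + (e (0, 0) * e (1, 1) - e (0, 1) * e (1, 0)) * cj (e (1, 1))) * cj (w 0) + ((μ : ℂ) * e (0, 1) - (e (0, 0) * e (1, 1) - e (0, 1) * e (1, 0)) * cj (e (1, 0))) * cj (w 1)) := by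
    rw [hγ]
    simp only [ff00, ff01, ff10, ff11, map_add, map_mul, map_sub, map_neg,
      Complex.conj_conj, Complex.conj_ofReal]
    try ring
  simp only [ff00, ff01, ff10, ff11] at hγ
  simp only [ff00, ff01, ff10, ff11, map_add, map_mul, map_sub, map_neg,
    map_one, Complex.conj_conj, Complex.conj_ofReal]
  linear_combination (norm := ring1) (((-(μ : ℂ) * e (1, 0) + (e (0, 0) * e (1, 1) - e (0, 1) * e (1, 0)) * cj (e (0, 1))) * (-cj (e (1, 0))) + (-(μ : ℂ) * e (1, 1) - (e (0, 0) * e (1, 1) - e (0, 1) * e (1, 0)) * cj (e (0, 0))) * (-cj (e (1, 1))) + ((μ : ℂ) * e (0, 0) + (e (0, 0) * e (1, 1) - e (0, 1) * e (1, 0)) * cj (e (1, 1))) * cj (e (0, 0)) + ((μ : ℂ) * e (0, 1) - (e (0, 0) * e (1, 1) - e (0, 1) * e (1, 0)) * cj (e (1, 0))) * cj (e (0, 1)) + (μ : ℂ) * (4 * (μ : ℂ) + (e (0, 0) * cj (e (0, 0)) + e (0, 1) * cj (e (0, 1)) + e (1, 0) * cj (e (1, 0)) + e (1, 1) * cj (e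 (1, 1))))) - (1 - (μ : ℂ)) * γ * ((u 0 * cj (w 0)) * (-e (1, 0)) + (u 0 * cj (w 1)) * (-e (1, 1)) + (u 1 * cj (w 0)) * e (0, 0) + (u 1 * cj (w 1)) * e (0, 1)) - (1 - (μ : ℂ)) * cj γ * ((cj (u 0) * w 0) * (-cj (e (1, 0))) + (cj (u 0) * w 1) * (-cj (e (1, 1))) + (cj (u 1) * w 0) * cj (e (0, 0)) + (cj (u 1) * w 1) * cj (e (0, 1)))) * hμ2 + (-2 * (μ : ℂ) ^ 3) * he2 + ((1 - (μ : ℂ)) ^ 2 * γ * cj γ * (u 0 * w 0 * cj (e (0, 0)) + u 0 * w 1 * cj (e (0, 1)) + u 1 * w 0 * cj (e (1, 0)) + u 1 * w 1 * cj (e (1, 1)))) * horth + (-(1 - (μ : ℂ)) * γ * (((-(μ : ℂ) * e (1, 0) + (e (0, 0) * e (1, 1) - e (0, 1) * e (1, 0)) * cj (e (0, 1))) - (1 - (μ : ℂ)) * cj γ * (cj (u 0) * w 0)) * (u 0 * cj (w 0)) + ((-(μ : ℂ) * e (1, 1) - (e (0, 0) * e (1, 1) - e (0, 1) * e (1, 0))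 * cj (e (0, 0))) - (1 - (μ : ℂ)) * cj γ * (cj (u 0) * w 1)) * (u 0 * cj (w 1)) + (((μ : ℂ) * e (0, 0) + (e (0, 0) * e (1, 1) - e (0, 1) * e (1, 0)) * cj (e (1, 1))) - (1 - (μ : ℂ)) * cj γ * (cj (u 1) * w 0)) * (u 1 * cj (w 0)) + (((μ : ℂ) * e (0, 1) - (e (0, 0) * e (1, 1) - e (0, 1) * e (1, 0)) * cj (e (1, 0))) - (1 - (μ : ℂ)) * cj γ * (cj (u 1) * w 1)) * (u 1 * cj (w 1))) - (μ : ℂ) * (1 - (μ : ℂ)) * γ * cj γ) * hgg + (-(((-(μ : ℂ) * e (1, 0) + (e (0, 0) * e (1, 1) - e (0, 1) * e (1, 0)) * cj (e (0, 1))) - (1 - (μ : ℂ)) * cj γ * (cj (u 0) * w 0)) * (u 0 * cj (w 0)) + ((-(μ : ℂ) * e (1, 1) - (e (0, 0) * e (1, 1) - e (0, 1) * e (1, 0)) * cj (e (0, 0))) - (1 - (μ : ℂ)) * cj γ * (cj (u 0) * w 1)) * (u 0 * cj (w 1)) + (((μ : ℂ) * e (0, 0) + (e (0, 0) * e (1,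 1) - e (0, 1) * e (1, 0)) * cj (e (1, 1))) - (1 - (μ : ℂ)) * cj γ * (cj (u 1) * w 0)) * (u 1 * cj (w 0)) + (((μ : ℂ) * e (0, 1) - (e (0, 0) * e (1, 1) - e (0, 1) * e (1, 0)) * cj (e (1, 0))) - (1 - (μ : ℂ)) * cj γ * (cj (u 1) * w 1)) * (u 1 * cj (w 1))) - (μ : ℂ) * (1 - (μ : ℂ)) * cj γ) * hγ + (-(μ : ℂ) * γ - (μ : ℂ) * (1 - (μ : ℂ)) * γ) * hγc

lemma kron_conjTranspose (C D : Matrix (Fin 2) (Fin 2) ℂ) :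
    (Matrix.kroneckerMap (· * ·) C D).conjTranspose
      = Matrix.kroneckerMap (· * ·) C.conjTranspose D.conjTranspose := by
  refine Matrix.ext fun q r => ?_
  simp [Matrix.conjTranspose_apply, Matrix.kroneckerMap_apply, star_mul', mul_comm]

lemma kron_psd {A B : Matrix (Fin 2) (Fin 2) ℂ} (hA : A.PosSemidef) (hB : B.PosSemidef) :
    (Matrix.kroneckerMap (· * ·) A B).PosSemidef := by
  exact hA.kronecker hB

lemma real_smul_eq (c : ℝ) (f : (Fin 2 × Fin 2) → ℂ) : c • f = (c : ℂ) • f := by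
  funext j
  simp [Complex.real_smul]

set_option maxHeartbeats 4000000 in
/-- If p is a product unit vector and e an entangled unit vector orthogonal to p, then
the projection pp* + ee* has a partial transpose with a strictly negative eigenvalue;
in particular it is not separable. -/
theorem stmt14 (p e : TwoQubit) (hp : ‖p‖ = 1) (he : ‖e‖ = 1)
    (hpe : inner ℂ p e = (0 : ℂ)) (hprod : IsProductVec p) (hent : ¬ IsProductVec e) :
    HasNegEig (ptrans (projMat p e)) ∧ ¬ SeparableOp (projMat p e) := by
  classical
  obtain ⟨u, w, hu⟩ := hprod
  have hd : e (0, 0) * e (1, 1) - e (0, 1) * e (1, 0) ≠ 0 := fun h => hent (isProduct_of_det h)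
  set μ : ℝ := ‖e (0, 0) * e (1, 1) - e (0, 1) * e (1, 0)‖ with hμdef
  have hμpos : 0 < μ := norm_pos_iff.mpr hd
  have hμ2 : (μ : ℂ) * (μ : ℂ) = (e (0, 0) * e (1, 1) - e (0, 1) * e (1, 0)) *
      (cj (e (0, 0)) * cj (e (1, 1)) - cj (e (0, 1)) * cj (e (1, 0))) := by
    have h2 := Complex.mul_conj (e (0, 0) * e (1, 1) - e (0, 1) * e (1, 0))
    have h3 : (μ : ℂ) * (μ : ℂ)
        = ((Complex.normSq (e (0, 0) * e (1, 1) - e (0, 1) * e (1, 0)) : ℝ) : ℂ) := by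
      rw [hμdef]; norm_cast; rw [Complex.normSq_eq_norm_sq]; ring
    rw [h3, ← h2]
    simp only [map_sub, map_mul]
  have he2 : e (0, 0) * cj (e (0, 0)) + e (0, 1) * cj (e (0, 1)) + e (1, 0) * cj (e (1, 0)) +
      e (1, 1) * cj (e (1, 1)) = 1 := sum_mul_conj_of_norm_one he
  have hp2 := sum_mul_conj_of_norm_one hp
  have hgg : (u 0 * cj (u 0) + u 1 * cj (u 1)) * (w 0 * cj (w 0) + w 1 * cj (w 1)) = 1 := by
    simp only [hu, map_mul] at hp2
    linear_combination hp2
  have horth : cj (u 0) * cj (w 0) * e (0, 0) + cj (u 0) * cj (w 1) * e (0, 1) +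
      cj (u 1) * cj (w 0) * e (1, 0) + cj (u 1) * cj (w 1) * e (1, 1) = 0 := by
    have h := hpe
    rw [PiLp.inner_apply] at h
    simp only [RCLike.inner_apply] at h
    rw [sum_pq (fun i => e i * cj (p i))] at h
    simp only [hu, map_mul] at h
    linear_combination h
  have hμle : μ ≤ 1 / 2 := by
    have habs := sum_normSq_of_norm_one he
    have h1 : μ ≤ ‖e (0, 0)‖ * ‖e (1, 1)‖ +
        ‖e (0, 1)‖ * ‖e (1, 0)‖ := by
      rw [hμdef, sub_eq_add_neg]
      calc ‖e (0, 0) * e (1, 1) + -(e (0, 1) * e (1, 0))‖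
          ≤ ‖e (0, 0) * e (1, 1)‖ + ‖-(e (0, 1) * e (1, 0))‖ :=
            norm_add_le _ _
        _ = ‖e (0, 0)‖ * ‖e (1, 1)‖ +
            ‖e (0, 1)‖ * ‖e (1, 0)‖ := by
            rw [norm_neg, norm_mul, norm_mul]
    have h2 : (‖e (0, 0)‖) ^ 2 + (‖e (0, 1)‖) ^ 2 +
        (‖e (1, 0)‖) ^ 2 + (‖e (1, 1)‖) ^ 2 = 1 := by
      simpa [Complex.sq_norm] using habs
    nlinarith [h1, h2, sq_nonneg (‖e (0, 0)‖ - ‖e (1, 1)‖),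
      sq_nonneg (‖e (0, 1)‖ - ‖e (1, 0)‖)]
  set γ : ℂ := cj (u 0) * (ff00 μ e * w 0 + ff01 μ e * w 1) + cj (u 1) * (ff10 μ e * w 0 + ff11 μ e * w 1) with hγ
  have hbb : (ff00 μ e * w 0 + ff01 μ e * w 1) * cj (ff00 μ e * w 0 + ff01 μ e * w 1) +
      (ff10 μ e * w 0 + ff11 μ e * w 1) * cj (ff10 μ e * w 0 + ff11 μ e * w 1)
      = (((μ : ℝ) ^ 2 + 2 * (μ : ℝ) ^ 3 : ℝ) : ℂ) * (w 0 * cj (w 0) + w 1 * cj (w 1)) := by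
    push_cast
    simp only [ff00, ff01, ff10, ff11, map_add, map_mul, map_sub, map_neg,
      Complex.conj_conj, Complex.conj_ofReal]
    linear_combination (norm := ring1) ((μ : ℂ) ^ 2 * (w 0 * cj (w 0) + w 1 * cj (w 1))) * he2 - (2 * (μ : ℂ) * (w 0 * cj (w 0) + w 1 * cj (w 1)) + ((e (1, 1) * cj (e (1, 1)) + e (0, 1) * cj (e (0, 1))) * w 0 * cj (w 0) - (e (1, 1) * cj (e (1, 0)) + e (0, 1) * cj (e (0, 0))) * w 0 * cj (w 1) - (e (1, 0) * cj (e (1, 1)) + e (0, 0) * cj (e (0, 1))) * w 1 * cj (w 0) + (e (1, 0) * cj (e (1, 0)) + e (0, 0) * cj (e (0, 0))) * w 1 * cj (w 1))) * hμ2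
  have hb1 : Complex.normSq (ff00 μ e * w 0 + ff01 μ e * w 1) +
      Complex.normSq (ff10 μ e * w 0 + ff11 μ e * w 1)
      = (μ ^ 2 + 2 * μ ^ 3) * (Complex.normSq (w 0) + Complex.normSq (w 1)) := by
    have h := hbb
    rw [Complex.mul_conj, Complex.mul_conj, Complex.mul_conj, Complex.mul_conj] at h
    exact_mod_cast h
  have hupw : (Complex.normSq (u 0) + Complex.normSq (u 1)) *
      (Complex.normSq (w 0) + Complex.normSq (w 1)) = 1 := by
    have h := hgg
    rw [Complex.mul_conj, Complex.mul_conj, Complex.mul_conj, Complex.mul_conj] at h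
    exact_mod_cast h
  have hγb : Complex.normSq γ ≤ μ ^ 2 + 2 * μ ^ 3 := by
    rw [hγ]
    calc Complex.normSq (cj (u 0) * (ff00 μ e * w 0 + ff01 μ e * w 1) +
          cj (u 1) * (ff10 μ e * w 0 + ff11 μ e * w 1))
        ≤ (Complex.normSq (u 0) + Complex.normSq (u 1)) *
          (Complex.normSq (ff00 μ e * w 0 + ff01 μ e * w 1) +
            Complex.normSq (ff10 μ e * w 0 + ff11 μ e * w 1)) :=
          lagrange_aux (u 0) (u 1) _ _
      _ = (μ ^ 2 + 2 * μ ^ 3) * ((Complex.normSq (u 0) + Complex.normSq (u 1)) *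
            (Complex.normSq (w 0) + Complex.normSq (w 1))) := by rw [hb1]; ring
      _ = μ ^ 2 + 2 * μ ^ 3 := by rw [hupw]; ring
  set x : (Fin 2 × Fin 2) → ℂ := fun q =>
    (!![ff00 μ e, ff01 μ e; ff10 μ e, ff11 μ e]) q.1 q.2
      - (1 - (μ : ℂ)) * γ * (u q.1 * cj (w q.2)) with hxdef
  have hx00 : x (0, 0) = ff00 μ e - (1 - (μ : ℂ)) * γ * (u 0 * cj (w 0)) := by
    rw [hxdef]; norm_num
  have hx01 : x (0, 1) = ff01 μ e - (1 - (μ : ℂ)) * γ * (u 0 * cj (w 1)) := by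
    rw [hxdef]; norm_num
  have hx10 : x (1, 0) = ff10 μ e - (1 - (μ : ℂ)) * γ * (u 1 * cj (w 0)) := by
    rw [hxdef]; norm_num
  have hx11 : x (1, 1) = ff11 μ e - (1 - (μ : ℂ)) * γ * (u 1 * cj (w 1)) := by
    rw [hxdef]; norm_num
  have hmv : ∀ (y : (Fin 2 × Fin 2) → ℂ) (a b : Fin 2),
      (ptrans (projMat p e)).mulVec y (a, b)
      = ((cj (u 0) * w 0) * y (0, 0) + (cj (u 0) * w 1) * y (0, 1) +
          (cj (u 1) * w 0) * y (1, 0) + (cj (u 1) * w 1) * y (1, 1)) * (u a * cj (w b))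
        + (e (a, 0) * cj (e (0, b)) * y (0, 0) + e (a, 1) * cj (e (0, b)) * y (0, 1) +
            e (a, 0) * cj (e (1, b)) * y (1, 0) + e (a, 1) * cj (e (1, b)) * y (1, 1)) := by
    intro y a b
    show ∑ i : Fin 2 × Fin 2, ptrans (projMat p e) (a, b) i * y i = _
    rw [sum_pq (fun i => ptrans (projMat p e) (a, b) i * y i)]
    simp only [ptrans, projMat, Matrix.of_apply, hu, Complex.star_def, map_mul]
    ring
  have hqf : dotProduct (star x) ((ptrans (projMat p e)).mulVec x)
      = (((2 * μ - μ ^ 2) * Complex.normSq γ - μ * (2 * μ ^ 2 + 4 * μ ^ 3) : ℝ) : ℂ) := by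
    have hb2 := bigQF μ e u w γ hμ2 he2 horth hgg hγ
    calc dotProduct (star x) ((ptrans (projMat p e)).mulVec x)
        = ∑ q : Fin 2 × Fin 2, cj (x q) * (ptrans (projMat p e)).mulVec x q := by
          simp only [dotProduct, Pi.star_apply, Complex.star_def]
      _ = (((2 * μ - μ ^ 2) * Complex.normSq γ - μ * (2 * μ ^ 2 + 4 * μ ^ 3) : ℝ) : ℂ) := by
          rw [sum_pq (fun q => cj (x q) * (ptrans (projMat p e)).mulVec x q)]
          rw [hmv x 0 0, hmv x 0 1, hmv x 1 0, hmv x 1 1]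
          rw [hx00, hx01, hx10, hx11]
          push_cast
          rw [show ((Complex.normSq γ : ℝ) : ℂ) = γ * cj γ from (Complex.mul_conj γ).symm]
          simp only [map_sub, map_mul, map_add, map_one, Complex.conj_conj, Complex.conj_ofReal]
          linear_combination hb2
  have hrlt : ((2 * μ - μ ^ 2) * Complex.normSq γ - μ * (2 * μ ^ 2 + 4 * μ ^ 3) : ℝ) < 0 := by
    have h1 : (2 * μ - μ ^ 2) * Complex.normSq γ ≤ (2 * μ - μ ^ 2) * (μ ^ 2 + 2 * μ ^ 3) := by
      apply mul_le_mul_of_nonneg_left hγb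
      nlinarith
    nlinarith [pow_pos hμpos 4, pow_pos hμpos 5]
  have hnotpsd : ¬ (ptrans (projMat p e)).PosSemidef := by
    intro hpsd
    have h0 := hpsd.dotProduct_mulVec_nonneg x
    rw [hqf, Complex.zero_le_real] at h0
    linarith
  constructor
  · have hherm : (ptrans (projMat p e)).IsHermitian := by
      refine Matrix.ext fun q r => ?_
      obtain ⟨a, b⟩ := q; obtain ⟨c, d⟩ := r
      simp only [Matrix.conjTranspose_apply, ptrans, projMat, Matrix.of_apply, star_add,
        star_mul', star_star]
      ring
    have hex : ∃ i, hherm.eigenvalues i < 0 := by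
      by_contra hcon
      push_neg at hcon
      exact hnotpsd (hherm.posSemidef_iff_eigenvalues_nonneg.mpr hcon)
    obtain ⟨i, hi⟩ := hex
    have hmve := hherm.mulVec_eigenvectorBasis i
    rw [real_smul_eq] at hmve
    exact ⟨hherm.eigenvalues i, hi, _, (WithLp.ofLp_eq_zero 2).ne.2 (hherm.eigenvectorBasis.orthonormal.ne_zero i), hmve⟩
  · intro hsep
    obtain ⟨n, A, B, hA, hB, hM⟩ := hsep
    apply hnotpsd
    have heq : ptrans (projMat p e) = ∑ i, Matrix.kroneckerMap (· * ·) (A i) (B i).transpose := by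
      rw [hM]
      refine Matrix.ext fun q r => ?_
      simp only [ptrans, Matrix.of_apply, Matrix.sum_apply, Matrix.kroneckerMap_apply,
        Matrix.transpose_apply]
    rw [heq]
    refine Finset.sum_induction _ Matrix.PosSemidef (fun a b ha hb => ha.add hb)
      Matrix.PosSemidef.zero (fun i _ => kron_psd (hA i) ((hB i).transpose))
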